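/- Let p > 2 and let A be the n×n matrix with a_{ij} = 2p^{i+j} if j > i, p^{2i} if j = i, and 0 if j < i. Then for every nonempty subset S of {1,…,n} there exists a mixed strategy y with support exactly S such that (y,y) is a Nash equilibrium of (A, Aᵀ). Consequently the game (A, Aᵀ) has at least 2^n − 1 Nash equilibria. -/

import Mathlib

open Matrix

def simplex (m : ℕ) : Set (Fin m → ℝ) := {x | (∀ i, 0 ≤ x i) ∧ ∑ i, x i = 1}

def isNash {m n : ℕ} (A B : Matrix (Fin m) (Fin n) ℝ)
    (x : Fin m → ℝ) (y : Fin n → ℝ) : Prop :=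
  x ∈ simplex m ∧ y ∈ simplex n ∧
  (∀ x' ∈ simplex m, x' ⬝ᵥ A.mulVec y ≤ x ⬝ᵥ A.mulVec y) ∧
  (∀ y' ∈ simplex n, x ⬝ᵥ B.mulVec y' ≤ x ⬝ᵥ B.mulVec y)

noncomputable def expoA (n : ℕ) (p : ℝ) : Matrix (Fin n) (Fin n) ℝ :=
  Matrix.of fun i j =>
    if (i : ℕ) < (j : ℕ) then 2 * p ^ ((i : ℕ) + 1 + ((j : ℕ) + 1))
    else if i = j then p ^ (2 * ((i : ℕ) + 1)) else 0


noncomputable def UU (n : ℕ) (p : ℝ) (S : Finset (Fin n)) : ℕ → ℝ := fun j =>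
  if h : j < n then
    (if (⟨j, h⟩ : Fin n) ∈ S then p⁻¹ ^ (j + 1) - UU n p S (j + 1)
     else UU n p S (j + 1))
  else 0
  termination_by j => n - j
  decreasing_by all_goals omega

lemma UU_of_ge {n : ℕ} {p : ℝ} {S : Finset (Fin n)} {j : ℕ} (h : n ≤ j) :
    UU n p S j = 0 := by
  rw [UU]; rw [dif_neg (by omega)]

lemma UU_of_lt {n : ℕ} {p : ℝ} {S : Finset (Fin n)} {j : ℕ} (h : j < n) :
    UU n p S j = if (⟨j, h⟩ : Fin n) ∈ S then p⁻¹ ^ (j + 1) - UU n p S (j + 1)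
      else UU n p S (j + 1) := by
  rw [UU]; rw [dif_pos h]

lemma UU_bounds {n : ℕ} {p : ℝ} (hp : 2 < p) (S : Finset (Fin n)) (j : ℕ) :
    0 ≤ UU n p S j ∧ UU n p S j ≤ p⁻¹ ^ (j + 1) := by
  have hp0 : (0:ℝ) < p := by linarith
  have hq0 : (0:ℝ) < p⁻¹ := inv_pos.mpr hp0
  have hq1 : p⁻¹ < 1 := by
    rw [inv_lt_one_iff₀]; right; linarith
  suffices H : ∀ m j, n - j ≤ m → 0 ≤ UU n p S j ∧ UU n p S j ≤ p⁻¹ ^ (j + 1) from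
    H n j (by omega)
  intro m
  induction m with
  | zero =>
    intro j hj
    rw [UU_of_ge (by omega)]
    exact ⟨le_refl _, by positivity⟩
  | succ m ih =>
    intro j hj
    by_cases h : j < n
    · rw [UU_of_lt h]
      obtain ⟨h1, h2⟩ := ih (j + 1) (by omega)
      have hk : p⁻¹ ^ (j + 1 + 1) = p⁻¹ ^ (j + 1) * p⁻¹ := pow_succ _ _
      have hpos : (0:ℝ) < p⁻¹ ^ (j + 1) := by positivity
      split_ifs with hs
      · constructor <;> nlinarith
      · constructor
        · exact h1
        · nlinarith
    · rw [UU_of_ge (by omega)]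
      exact ⟨le_refl _, by positivity⟩

noncomputable def zz (n : ℕ) (p : ℝ) (S : Finset (Fin n)) (j : ℕ) : ℝ :=
  UU n p S j - UU n p S (j + 1)

noncomputable def ww (n : ℕ) (p : ℝ) (S : Finset (Fin n)) : Fin n → ℝ :=
  fun j => p⁻¹ ^ ((j : ℕ) + 1) * zz n p S (j : ℕ)

lemma sum_zz {n : ℕ} {p : ℝ} {S : Finset (Fin n)} {a : ℕ} (h : a ≤ n) :
    ∑ j ∈ Finset.Ico a n, zz n p S j = UU n p S a := by
  rw [Finset.sum_Ico_eq_sum_range]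
  calc ∑ k ∈ Finset.range (n - a), zz n p S (a + k)
      = ∑ k ∈ Finset.range (n - a),
          ((fun k => UU n p S (a + k)) k - (fun k => UU n p S (a + k)) (k + 1)) := by
        apply Finset.sum_congr rfl
        intro k _
        simp only [zz]
        congr 1
    _ = UU n p S (a + 0) - UU n p S (a + (n - a)) := Finset.sum_range_sub' _ _
    _ = UU n p S a := by
        rw [show UU n p S (a + (n - a)) = 0 from UU_of_ge (by omega), add_zero, sub_zero]

lemma mulVec_ww {n : ℕ} {p : ℝ} (hp : 2 < p) (S : Finset (Fin n)) (i : Fin n) :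
    (expoA n p).mulVec (ww n p S) i
      = p ^ ((i : ℕ) + 1) * (zz n p S (i : ℕ) + 2 * UU n p S ((i : ℕ) + 1)) := by
  have hp0 : p ≠ 0 := by positivity
  have hcan : ∀ k : ℕ, p ^ k * p⁻¹ ^ k = 1 := fun k => by
    rw [← mul_pow, mul_inv_cancel₀ hp0, one_pow]
  set g : ℕ → ℝ := fun j =>
    if (i : ℕ) < j then 2 * p ^ ((i : ℕ) + 1) * zz n p S j
    else if j = (i : ℕ) then p ^ ((i : ℕ) + 1) * zz n p S j else 0 with hg
  have step1 : (expoA n p).mulVec (ww n p S) i = ∑ j ∈ Finset.range n, g j := by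
    rw [← Fin.sum_univ_eq_sum_range g n]
    show ∑ j : Fin n, expoA n p i j * ww n p S j = _
    apply Finset.sum_congr rfl
    intro j _
    simp only [expoA, ww, hg, Matrix.of_apply]
    have hp0' : (0:ℝ) < p := by linarith
    rcases lt_trichotomy (i : ℕ) (j : ℕ) with hij | hij | hij
    · rw [if_pos hij, if_pos hij, inv_pow]
      field_simp
      ring
    · have hij' : i = j := Fin.ext hij
      subst hij'
      simp only [lt_self_iff_false, ite_false, ite_true]
      rw [inv_pow]
      field_simp
      ring
    · rw [if_neg (show ¬ (i : ℕ) < (j : ℕ) by omega)]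
      rw [if_neg (show ¬ i = j by rw [Fin.ext_iff]; omega)]
      rw [if_neg (show ¬ (j : ℕ) = (i : ℕ) by omega), zero_mul]
      rw [if_neg (show ¬ (i : ℕ) < (j : ℕ) by omega)]
  have hisucc : (i : ℕ) + 1 ≤ n := i.isLt
  have step2 : ∑ j ∈ Finset.range n, g j
      = ∑ j ∈ Finset.Ico 0 ((i : ℕ) + 1), g j + ∑ j ∈ Finset.Ico ((i : ℕ) + 1) n, g j := by
    rw [Finset.range_eq_Ico, ← Finset.sum_Ico_consecutive _ (Nat.zero_le _) hisucc]
  have step3 : ∑ j ∈ Finset.Ico 0 ((i : ℕ) + 1), g j = p ^ ((i : ℕ) + 1) * zz n p S (i : ℕ) := by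
    have : ∀ j ∈ Finset.Ico 0 ((i : ℕ) + 1), g j
        = if j = (i : ℕ) then p ^ ((i : ℕ) + 1) * zz n p S (i : ℕ) else 0 := by
      intro j hj
      rw [Finset.mem_Ico] at hj
      simp only [hg]
      rw [if_neg (by omega)]
      by_cases h : j = (i : ℕ)
      · rw [if_pos h, if_pos h, h]
      · rw [if_neg h, if_neg h]
    rw [Finset.sum_congr rfl this, Finset.sum_ite_eq' _ (i : ℕ)]
    rw [if_pos (Finset.mem_Ico.mpr ⟨Nat.zero_le _, by omega⟩)]
  have step4 : ∑ j ∈ Finset.Ico ((i : ℕ) + 1) n, g j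
      = 2 * p ^ ((i : ℕ) + 1) * UU n p S ((i : ℕ) + 1) := by
    have : ∀ j ∈ Finset.Ico ((i : ℕ) + 1) n, g j = 2 * p ^ ((i : ℕ) + 1) * zz n p S j := by
      intro j hj
      rw [Finset.mem_Ico] at hj
      simp only [hg]
      rw [if_pos (by omega)]
    rw [Finset.sum_congr rfl this, ← Finset.mul_sum, sum_zz hisucc]
  rw [step1, step2, step3, step4]
  ring

lemma main_construct {n : ℕ} {p : ℝ} (hp : 2 < p) (S : Finset (Fin n)) (hS : S.Nonempty) :
    ∃ y ∈ simplex n, {j | 0 < y j} = ↑S ∧ isNash (expoA n p) (expoA n p)ᵀ y y := by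
  have hp0 : (0:ℝ) < p := by linarith
  have hq0 : (0:ℝ) < p⁻¹ := inv_pos.mpr hp0
  have hcan : ∀ k : ℕ, p ^ k * p⁻¹ ^ k = 1 := fun k => by
    rw [← mul_pow, mul_inv_cancel₀ (ne_of_gt hp0), one_pow]
  have hqh : 2 * p⁻¹ < 1 := by
    have h1 : p * p⁻¹ = 1 := mul_inv_cancel₀ (ne_of_gt hp0)
    nlinarith
  set w := ww n p S with hw
  -- zz on/off support
  have hzz_mem : ∀ i : Fin n, i ∈ S →
      zz n p S (i : ℕ) = p⁻¹ ^ ((i : ℕ) + 1) - 2 * UU n p S ((i : ℕ) + 1) := by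
    intro i hi
    have h := UU_of_lt (p := p) (S := S) i.isLt
    rw [if_pos (by simpa using hi)] at h
    simp only [zz, h]
    ring
  have hzz_not : ∀ i : Fin n, i ∉ S → zz n p S (i : ℕ) = 0 := by
    intro i hi
    have h := UU_of_lt (p := p) (S := S) i.isLt
    rw [if_neg (by simpa using hi)] at h
    simp only [zz, h, sub_self]
  have hzz_pos : ∀ i : Fin n, i ∈ S → 0 < zz n p S (i : ℕ) := by
    intro i hi
    rw [hzz_mem i hi]
    have hb := (UU_bounds hp S ((i : ℕ) + 1)).2
    have hb0 := (UU_bounds hp S ((i : ℕ) + 1)).1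
    have hk : p⁻¹ ^ ((i : ℕ) + 1 + 1) = p⁻¹ ^ ((i : ℕ) + 1) * p⁻¹ := pow_succ _ _
    have hpp : (0:ℝ) < p⁻¹ ^ ((i : ℕ) + 1) := by positivity
    nlinarith
  have hwpos : ∀ i : Fin n, i ∈ S → 0 < w i := by
    intro i hi
    have := hzz_pos i hi
    have hpp : (0:ℝ) < p⁻¹ ^ ((i : ℕ) + 1) := by positivity
    simp only [hw, ww]
    positivity
  have hwzero : ∀ i : Fin n, i ∉ S → w i = 0 := by
    intro i hi
    simp only [hw, ww, hzz_not i hi, mul_zero]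
  have hwnonneg : ∀ i, 0 ≤ w i := by
    intro i
    by_cases hi : i ∈ S
    · exact le_of_lt (hwpos i hi)
    · rw [hwzero i hi]
  -- values of A *ᵥ w
  have hAw_mem : ∀ i : Fin n, i ∈ S → (expoA n p).mulVec w i = 1 := by
    intro i hi
    rw [mulVec_ww hp, hzz_mem i hi]
    have := hcan ((i : ℕ) + 1)
    nlinarith
  have hAw_le : ∀ i : Fin n, (expoA n p).mulVec w i ≤ 1 := by
    intro i
    by_cases hi : i ∈ S
    · rw [hAw_mem i hi]
    · rw [mulVec_ww hp, hzz_not i hi]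
      have hb := (UU_bounds hp S ((i : ℕ) + 1)).2
      have hb0 := (UU_bounds hp S ((i : ℕ) + 1)).1
      have hP : (0:ℝ) < p ^ ((i : ℕ) + 1) := by positivity
      have hkey : p ^ ((i : ℕ) + 1) * p⁻¹ ^ ((i : ℕ) + 1 + 1) = p⁻¹ := by
        rw [pow_succ p⁻¹ ((i : ℕ) + 1), ← mul_assoc, hcan, one_mul]
      nlinarith [mul_le_mul_of_nonneg_left hb (le_of_lt hP)]
  -- normalization
  set c := ∑ i, w i with hc
  obtain ⟨i0, hi0⟩ := hS
  have hcpos : 0 < c := by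
    have h1 : w i0 ≤ c :=
      Finset.single_le_sum (fun i _ => hwnonneg i) (Finset.mem_univ i0)
    exact lt_of_lt_of_le (hwpos i0 hi0) h1
  have hcinv : 0 < c⁻¹ := inv_pos.mpr hcpos
  set y : Fin n → ℝ := c⁻¹ • w with hy
  have hyi : ∀ i, y i = c⁻¹ * w i := fun i => rfl
  have hysimp : y ∈ simplex n := by
    constructor
    · intro i
      rw [hyi]
      exact mul_nonneg (le_of_lt hcinv) (hwnonneg i)
    · simp only [hyi]
      rw [← Finset.mul_sum, ← hc, inv_mul_cancel₀ (ne_of_gt hcpos)]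
  have hAy : (expoA n p).mulVec y = c⁻¹ • (expoA n p).mulVec w := by
    rw [hy, Matrix.mulVec_smul]
  have hsupp : {j | 0 < y j} = ↑S := by
    ext j
    simp only [Set.mem_setOf_eq, Finset.coe_sort_coe, Finset.mem_coe]
    constructor
    · intro hj
      by_contra hns
      rw [hyi, hwzero j hns, mul_zero] at hj
      exact lt_irrefl 0 hj
    · intro hj
      rw [hyi]
      exact mul_pos hcinv (hwpos j hj)
  -- key inequalities
  have key : ∀ v ∈ simplex n, v ⬝ᵥ (expoA n p).mulVec y ≤ c⁻¹ := by
    intro v hv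
    rw [hAy]
    calc v ⬝ᵥ c⁻¹ • (expoA n p).mulVec w
        = ∑ i, v i * (c⁻¹ * (expoA n p).mulVec w i) := rfl
      _ ≤ ∑ i, v i * c⁻¹ := by
          apply Finset.sum_le_sum
          intro i _
          apply mul_le_mul_of_nonneg_left _ (hv.1 i)
          calc c⁻¹ * (expoA n p).mulVec w i ≤ c⁻¹ * 1 :=
                mul_le_mul_of_nonneg_left (hAw_le i) (le_of_lt hcinv)
            _ = c⁻¹ := mul_one _
      _ = c⁻¹ := by rw [← Finset.sum_mul, hv.2, one_mul]
  have keyeq : y ⬝ᵥ (expoA n p).mulVec y = c⁻¹ := by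
    rw [hAy]
    calc y ⬝ᵥ c⁻¹ • (expoA n p).mulVec w
        = ∑ i, y i * (c⁻¹ * (expoA n p).mulVec w i) := rfl
      _ = ∑ i, y i * c⁻¹ := by
          apply Finset.sum_congr rfl
          intro i _
          by_cases hi : i ∈ S
          · rw [hAw_mem i hi, mul_one]
          · rw [hyi, hwzero i hi, mul_zero, zero_mul, zero_mul]
      _ = c⁻¹ := by rw [← Finset.sum_mul, hysimp.2, one_mul]
  have htrans : ∀ v : Fin n → ℝ, y ⬝ᵥ (expoA n p)ᵀ.mulVec v = v ⬝ᵥ (expoA n p).mulVec y := by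
    intro v
    rw [Matrix.dotProduct_mulVec, Matrix.vecMul_transpose, dotProduct_comm]
  refine ⟨y, hysimp, hsupp, hysimp, hysimp, ?_, ?_⟩
  · intro x' hx'
    rw [keyeq]
    exact key x' hx'
  · intro y' hy'
    rw [htrans y', htrans y, keyeq]
    exact key y' hy'


theorem stmt17 {n : ℕ} (p : ℝ) (hp : 2 < p) :
    (∀ S : Finset (Fin n), S.Nonempty →
      ∃ y ∈ simplex n, {j | 0 < y j} = ↑S ∧ isNash (expoA n p) (expoA n p)ᵀ y y) ∧
    ∃ T : Finset ((Fin n → ℝ) × (Fin n → ℝ)),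
      (∀ e ∈ T, isNash (expoA n p) (expoA n p)ᵀ e.1 e.2) ∧ 2 ^ n - 1 ≤ T.card := by
  classical
  have part1 : ∀ S : Finset (Fin n), S.Nonempty →
      ∃ y ∈ simplex n, {j | 0 < y j} = ↑S ∧ isNash (expoA n p) (expoA n p)ᵀ y y :=
    fun S hS => main_construct hp S hS
  refine ⟨part1, ?_⟩
  let f : Finset (Fin n) → (Fin n → ℝ) := fun S =>
    if h : S.Nonempty then (part1 S h).choose else 0
  have hf : ∀ (S : Finset (Fin n)) (h : S.Nonempty),
      f S ∈ simplex n ∧ {j | 0 < f S j} = ↑S ∧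
      isNash (expoA n p) (expoA n p)ᵀ (f S) (f S) := by
    intro S h
    simp only [f, dif_pos h]
    obtain ⟨hy1, hy2, hy3⟩ := (part1 S h).choose_spec
    exact ⟨hy1, hy2, hy3⟩
  have hinj : Set.InjOn (fun S => (f S, f S))
      ↑(Finset.univ.filter (fun S : Finset (Fin n) => S.Nonempty)) := by
    intro S1 h1 S2 h2 he
    rw [Finset.mem_coe, Finset.mem_filter] at h1 h2
    have e1 := (hf S1 h1.2).2.1
    have e2 := (hf S2 h2.2).2.1
    have hfs : f S1 = f S2 := congrArg Prod.fst he
    rw [hfs] at e1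
    exact Finset.coe_injective (e1.symm.trans e2)
  have hcard : (Finset.univ.filter (fun S : Finset (Fin n) => S.Nonempty)).card
      = 2 ^ n - 1 := by
    have heq : Finset.univ.filter (fun S : Finset (Fin n) => S.Nonempty)
        = Finset.univ.erase ∅ := by
      ext S
      simp [Finset.nonempty_iff_ne_empty]
    rw [heq, Finset.card_erase_of_mem (Finset.mem_univ _), Finset.card_univ,
      Fintype.card_finset, Fintype.card_fin]
  refine ⟨(Finset.univ.filter (fun S : Finset (Fin n) => S.Nonempty)).image
    (fun S => (f S, f S)), ?_, ?_⟩
  · intro e he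
    rw [Finset.mem_image] at he
    obtain ⟨S, hSmem, rfl⟩ := he
    rw [Finset.mem_filter] at hSmem
    exact (hf S hSmem.2).2.2
  · rw [Finset.card_image_of_injOn hinj, hcard]
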